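/- For i = 1, 2, let G_i be an abelian group with an element of order at least 3, and let G = G_1 × G_2 with generating set S = (S_1 × {1}) ∪ ({1} × S_2) where S_i generates G_i. Then the four maps id, η, η_1 × id, id × η_2 (where η_i is inversion on G_i and η is inversion on G) are pairwise distinct elements of ξ_S; in particular |ξ_S| ≥ 4 > |ξ_G| = 2. -/
import Mathlib

lemma xi_key {G : Type*} [CommGroup G] (φ : Equiv.Perm G) (hone : φ 1 = 1)
    (hφ : ∀ g h : G, φ (g * h) = φ g * h ∨ φ (g * h) = φ g * h⁻¹)
    (a b : G) (ha2 : a ^ 2 ≠ 1) (hb2 : b ^ 2 ≠ 1)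
    (ha : φ a = a) (hb : φ b = b⁻¹) : False := by
  have hb' : b ≠ b⁻¹ := fun h => hb2 (by rw [sq]; nth_rewrite 1 [h]; exact inv_mul_cancel b)
  have ha' : a ≠ a⁻¹ := fun h => ha2 (by rw [sq]; nth_rewrite 1 [h]; exact inv_mul_cancel a)
  have hval : ∀ x : G, φ x = x ∨ φ x = x⁻¹ := by
    intro x
    simpa [hone] using hφ 1 x
  have h1 := hφ a b
  rw [ha] at h1
  have h2 := hφ b a
  rw [hb, mul_comm b a] at h2
  -- step 1
  have hfab : φ (a * b) = a * b := by
    rcases h1 with h1 | h1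
    · exact h1
    · rcases hval (a * b) with h0 | h0
      · rw [h1] at h0
        exact absurd (mul_left_cancel h0) hb'.symm
      · rw [h1, mul_inv, mul_comm a⁻¹ b⁻¹, mul_comm a b⁻¹] at h0
        exact absurd (mul_left_cancel h0) ha'
  have hab2 : (a * b) ^ 2 = 1 := by
    rcases h2 with h2 | h2
    · rw [hfab, mul_comm b⁻¹ a] at h2
      exact absurd (mul_left_cancel h2) hb'
    · rw [hfab] at h2
      rw [sq]
      nth_rewrite 2 [h2]
      group
  have habinv : (a * b)⁻¹ = a * b := by
    rw [inv_eq_iff_mul_eq_one, ← sq, hab2]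
  -- step 2
  have h3 := hφ a (a * b)
  rw [ha, habinv] at h3
  have hfab2 : φ (a * (a * b)) = a * (a * b) := by rcases h3 with h | h <;> exact h
  have h4 := hφ b (a ^ 2)
  rw [hb, show b * a ^ 2 = a * (a * b) by rw [sq, mul_comm b _]; group, hfab2] at h4
  rcases h4 with h | h
  · have h' : a ^ 2 * b = a ^ 2 * b⁻¹ := by
      rw [sq, mul_assoc, h, mul_comm, sq]
    exact hb' (mul_left_cancel h')
  · have hab2' : a ^ 2 * b ^ 2 = 1 := by rw [← mul_pow, hab2]
    have h4' : a ^ 2 * b * (a ^ 2 * b) = 1 := by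
      have e : a ^ 2 * b = b⁻¹ * (a ^ 2)⁻¹ := by rw [← h, sq]; group
      nth_rewrite 1 [e]
      group
    have e : a ^ 2 * b * (a ^ 2 * b) = a ^ 2 * (a ^ 2 * b ^ 2) := by
      rw [mul_mul_mul_comm, ← mul_assoc, sq b]; group
    rw [e, hab2', mul_one] at h4'
    exact ha2 h4'


/-- For `G = G₁ × G₂` a product of two abelian groups each having an element of
order at least 3, with generating set `S = (S₁ × {1}) ∪ ({1} × S₂)`, the four maps
`id`, `η`, `η₁ × id`, `id × η₂` are pairwise distinct elements of `ξ_S`; in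
particular `|ξ_S| ≥ 4 > 2 = |ξ_G|`. -/
theorem xi_S_of_product {G₁ G₂ : Type*} [CommGroup G₁] [CommGroup G₂]
    (g₁ : G₁) (hg₁ : g₁ ≠ 1) (hg₁' : g₁ ^ 2 ≠ 1)
    (g₂ : G₂) (hg₂ : g₂ ≠ 1) (hg₂' : g₂ ^ 2 ≠ 1)
    (S₁ : Set G₁) (S₂ : Set G₂)
    (hS₁ : Subgroup.closure S₁ = ⊤) (hS₂ : Subgroup.closure S₂ = ⊤) :
    letI S : Set (G₁ × G₂) := (S₁ ×ˢ {1}) ∪ ({1} ×ˢ S₂)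
    letI xiS : Set (Equiv.Perm (G₁ × G₂)) := {φ | φ 1 = 1 ∧
      ∀ g : G₁ × G₂, ∀ s ∈ S, φ (g * s) = φ g * s ∨ φ (g * s) = φ g * s⁻¹}
    letI xiG : Set (Equiv.Perm (G₁ × G₂)) := {φ | φ 1 = 1 ∧
      ∀ g h : G₁ × G₂, φ (g * h) = φ g * h ∨ φ (g * h) = φ g * h⁻¹}
    letI e₀ : Equiv.Perm (G₁ × G₂) := Equiv.refl _
    letI e₁ : Equiv.Perm (G₁ × G₂) := Equiv.inv (G₁ × G₂)
    letI e₂ : Equiv.Perm (G₁ × G₂) := (Equiv.inv G₁).prodCongr (Equiv.refl G₂)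
    letI e₃ : Equiv.Perm (G₁ × G₂) := (Equiv.refl G₁).prodCongr (Equiv.inv G₂)
    e₀ ∈ xiS ∧ e₁ ∈ xiS ∧ e₂ ∈ xiS ∧ e₃ ∈ xiS ∧
      ([e₀, e₁, e₂, e₃] : List (Equiv.Perm (G₁ × G₂))).Nodup ∧
      xiG = {e₀, e₁} := by
  set e₀ : Equiv.Perm (G₁ × G₂) := Equiv.refl _ with he0d
  set e₁ : Equiv.Perm (G₁ × G₂) := Equiv.inv (G₁ × G₂) with he1d
  set e₂ : Equiv.Perm (G₁ × G₂) := (Equiv.inv G₁).prodCongr (Equiv.refl G₂) with he2d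
  set e₃ : Equiv.Perm (G₁ × G₂) := (Equiv.refl G₁).prodCongr (Equiv.inv G₂) with he3d
  have he₀ : ∀ x : G₁ × G₂, e₀ x = x := fun x => rfl
  have he₁ : ∀ x : G₁ × G₂, e₁ x = x⁻¹ := fun x => rfl
  have he₂ : ∀ x : G₁ × G₂, e₂ x = (x.1⁻¹, x.2) := fun x => rfl
  have he₃ : ∀ x : G₁ × G₂, e₃ x = (x.1, x.2⁻¹) := fun x => rfl
  have hg₁ne : g₁ ≠ g₁⁻¹ := fun h => hg₁' (by rw [sq]; nth_rewrite 1 [h]; exact inv_mul_cancel g₁)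
  have hg₂ne : g₂ ≠ g₂⁻¹ := fun h => hg₂' (by rw [sq]; nth_rewrite 1 [h]; exact inv_mul_cancel g₂)
  refine ⟨⟨rfl, fun g s _ => Or.inl rfl⟩, ?_, ?_, ?_, ?_, ?_⟩
  · refine ⟨inv_one, fun g s _ => Or.inr ?_⟩
    rw [he₁, he₁, mul_inv, mul_comm]
  · refine ⟨by rw [he₂]; simp, fun g s hs => ?_⟩
    simp only [Set.mem_union, Set.mem_prod, Set.mem_singleton_iff] at hs
    rcases hs with ⟨hs1, hs2⟩ | ⟨hs1, hs2⟩
    · refine Or.inr ?_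
      rw [he₂, he₂]
      ext
      · simp [mul_inv, mul_comm]
      · simp [hs2]
    · refine Or.inl ?_
      rw [he₂, he₂]
      ext
      · simp [hs1]
      · simp
  · refine ⟨by rw [he₃]; simp, fun g s hs => ?_⟩
    simp only [Set.mem_union, Set.mem_prod, Set.mem_singleton_iff] at hs
    rcases hs with ⟨hs1, hs2⟩ | ⟨hs1, hs2⟩
    · refine Or.inl ?_
      rw [he₃, he₃]
      ext
      · simp
      · simp [hs2]
    · refine Or.inr ?_
      rw [he₃, he₃]
      ext
      · simp [hs1]
      · simp [mul_inv, mul_comm]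
  · -- Nodup
    have d01 : e₀ ≠ e₁ := by
      intro h
      have := congrArg (fun f : Equiv.Perm (G₁ × G₂) => (f (g₁, 1)).1) h
      simp only [he₀, he₁] at this
      exact hg₁ne this
    have d02 : e₀ ≠ e₂ := by
      intro h
      have := congrArg (fun f : Equiv.Perm (G₁ × G₂) => (f (g₁, 1)).1) h
      simp only [he₀, he₂] at this
      exact hg₁ne this
    have d03 : e₀ ≠ e₃ := by
      intro h
      have := congrArg (fun f : Equiv.Perm (G₁ × G₂) => (f (1, g₂)).2) h
      simp only [he₀, he₃] at this
      exact hg₂ne this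
    have d12 : e₁ ≠ e₂ := by
      intro h
      have := congrArg (fun f : Equiv.Perm (G₁ × G₂) => (f (1, g₂)).2) h
      simp only [he₁, he₂, Prod.fst_inv, Prod.snd_inv] at this
      exact hg₂ne this.symm
    have d13 : e₁ ≠ e₃ := by
      intro h
      have := congrArg (fun f : Equiv.Perm (G₁ × G₂) => (f (g₁, 1)).1) h
      simp only [he₁, he₃, Prod.fst_inv] at this
      exact hg₁ne this.symm
    have d23 : e₂ ≠ e₃ := by
      intro h
      have := congrArg (fun f : Equiv.Perm (G₁ × G₂) => (f (g₁, 1)).1) h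
      simp only [he₂, he₃] at this
      exact hg₁ne this.symm
    simp [d01, d02, d03, d12, d13, d23]
  · -- xiG = {e₀, e₁}
    ext φ
    simp only [Set.mem_setOf_eq, Set.mem_insert_iff, Set.mem_singleton_iff]
    constructor
    · rintro ⟨hone, hφ⟩
      have hval : ∀ x : G₁ × G₂, φ x = x ∨ φ x = x⁻¹ := by
        intro x
        simpa [hone] using hφ 1 x
      have hfix : ∀ x : G₁ × G₂, x ^ 2 = 1 → φ x = x := by
        intro x hx
        rcases hval x with h | h
        · exact h
        · rw [h, inv_eq_iff_mul_eq_one, ← sq, hx]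
      have hG2 : ((g₁, 1) : G₁ × G₂) ^ 2 ≠ 1 := by
        intro h
        apply hg₁'
        have := congrArg Prod.fst h
        simpa using this
      rcases hval (g₁, 1) with hg | hg
      · left
        refine Equiv.ext fun x => ?_
        rw [he₀]
        rcases hval x with h | h
        · exact h
        · by_cases hx2 : x ^ 2 = 1
          · exact hfix x hx2
          · exact absurd (xi_key φ hone hφ (g₁, 1) x hG2 hx2 hg h) not_false
      · right
        refine Equiv.ext fun x => ?_
        rw [he₁]
        rcases hval x with h | h
        · by_cases hx2 : x ^ 2 = 1
          · rw [hfix x hx2, eq_comm, inv_eq_iff_mul_eq_one, ← sq, hx2]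
          · exact absurd (xi_key φ hone hφ x (g₁, 1) hx2 hG2 h hg) not_false
        · exact h
    · rintro (rfl | rfl)
      · exact ⟨rfl, fun g h => Or.inl rfl⟩
      · refine ⟨inv_one, fun g h => Or.inr ?_⟩
        rw [he₁, he₁, mul_inv, mul_comm]
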